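/- As x → ∞, one has lim_{x→∞} x² · (e^{−x}/(1 − e^{−x})) · ∫_0^x g(t)/t dt = 1; that is, the quantity h²(x) = (e^{−x}/(1 − e^{−x}))·∫_0^x g(t)/t dt is asymptotically equal to 1/x². -/

import Mathlib

open Real Filter

/-- Continuous extension helper. -/
lemma contAt_ite_zero (f : ℝ → ℝ) (L : ℝ) (h : Tendsto f (nhdsWithin 0 {(0:ℝ)}ᶜ) (nhds L)) :
    ContinuousAt (fun z : ℝ => if z = 0 then L else f z) 0 := by
  rw [ContinuousAt, if_pos rfl, ← nhdsNE_sup_pure (0:ℝ), tendsto_sup]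
  constructor
  · refine Tendsto.congr' ?_ h
    filter_upwards [self_mem_nhdsWithin] with z hz
    simp only [Set.mem_compl_iff, Set.mem_singleton_iff] at hz
    rw [if_neg hz]
  · simpa using tendsto_pure_nhds (fun z : ℝ => if z = 0 then L else f z) 0

/-- Derivative of `exp t / t ^ k`. -/
lemma hasDerivAt_u (k : ℕ) (hk : 1 ≤ k) (t : ℝ) (ht : 0 < t) :
    HasDerivAt (fun s => Real.exp s / s ^ k)
      (Real.exp t / t ^ k * (1 - (k : ℝ) / t)) t := by
  have h := (Real.hasDerivAt_exp t).div (hasDerivAt_pow k t) (pow_ne_zero k ht.ne')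
  refine h.congr_deriv ?_
  have hpk : t ^ k = t ^ (k - 1) * t := by rw [← pow_succ, Nat.sub_add_cancel hk]
  have hne : t ^ (k - 1) ≠ 0 := pow_ne_zero _ ht.ne'
  rw [hpk]
  field_simp

/-- The key asymptotic lemma: if `f(t) ~ e^t / t^k` then `∫_0^x f ~ e^x / x^k`. -/
lemma key (k : ℕ) (hk : 1 ≤ k) (f : ℝ → ℝ) (hf : Continuous f)
    (h : Tendsto (fun t => t ^ k * Real.exp (-t) * f t) atTop (nhds 1)) :
    Tendsto (fun x => x ^ k * Real.exp (-x) * ∫ t in (0:ℝ)..x, f t) atTop (nhds 1) := by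
  set u : ℝ → ℝ := fun t => Real.exp t / t ^ k with hu_def
  rw [Metric.tendsto_atTop]
  intro ε hε
  set ε' := min (ε / 6) (1 / 2) with hε'def
  have hε'pos : 0 < ε' := lt_min (by linarith) (by norm_num)
  have hε'le : ε' ≤ 1 / 2 := min_le_right _ _
  have hε'ε : 5 * ε' < ε := by
    have : ε' ≤ ε / 6 := min_le_left _ _
    linarith
  obtain ⟨T₀, hT₀⟩ := Metric.tendsto_atTop.1 h ε' hε'pos
  set T : ℝ := max (max T₀ 1) ((k : ℝ) / ε') with hT_def
  have hT1 : (1 : ℝ) ≤ T := le_trans (le_max_right T₀ 1) (le_max_left _ _)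
  have hT0 : (0 : ℝ) < T := lt_of_lt_of_le one_pos hT1
  have hTT₀ : T₀ ≤ T := le_trans (le_max_left T₀ 1) (le_max_left _ _)
  have hTk : (k : ℝ) ≤ ε' * T := by
    have : (k : ℝ) / ε' ≤ T := le_max_right _ _
    rw [div_le_iff₀ hε'pos] at this
    linarith [this]
  -- pointwise facts for t ≥ T
  have hupos : ∀ t : ℝ, 0 < t → 0 < u t := fun t ht =>
    div_pos (Real.exp_pos t) (pow_pos ht k)
  have hfact : ∀ t : ℝ, T ≤ t →
      (1 - ε') * u t ≤ f t ∧ f t ≤ (1 + ε') * u t ∧ (k : ℝ) / t ≤ ε' := by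
    intro t ht
    have ht0 : 0 < t := lt_of_lt_of_le hT0 ht
    have hA : |t ^ k * Real.exp (-t) * f t - 1| < ε' := by
      have := hT₀ t (le_trans hTT₀ ht)
      rwa [Real.dist_eq] at this
    have hfu : f t = (t ^ k * Real.exp (-t) * f t) * u t := by
      rw [hu_def]
      simp only
      rw [Real.exp_neg]
      field_simp
    have hu0 : 0 ≤ u t := (hupos t ht0).le
    rw [abs_sub_lt_iff] at hA
    refine ⟨?_, ?_, ?_⟩
    · rw [hfu]
      apply mul_le_mul_of_nonneg_right _ hu0
      linarith [hA.2]
    · rw [hfu]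
      apply mul_le_mul_of_nonneg_right _ hu0
      linarith [hA.1]
    · rw [div_le_iff₀ ht0]
      calc (k : ℝ) ≤ ε' * T := hTk
        _ ≤ ε' * t := by nlinarith
  -- the constant c₁
  set c₁ : ℝ := (1 + ε') / (1 - ε') with hc₁_def
  have h1ε : (0 : ℝ) < 1 - ε' := by linarith
  have hc₁mul : c₁ * (1 - ε') = 1 + ε' := div_mul_cancel₀ _ h1ε.ne'
  have hc₁pos : 0 < c₁ := div_pos (by linarith) h1ε
  have hc₁le : c₁ ≤ 1 + 4 * ε' := by
    rw [hc₁_def, div_le_iff₀ h1ε]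
    nlinarith
  -- continuity of u' expression on positive reals
  have hu'cont : ContinuousOn (fun t : ℝ => u t * (1 - (k : ℝ) / t)) (Set.Ici T) := by
    have hne : ∀ t ∈ Set.Ici T, t ^ k ≠ 0 := fun t ht =>
      pow_ne_zero _ (lt_of_lt_of_le hT0 ht).ne'
    have hne' : ∀ t ∈ Set.Ici T, t ≠ 0 := fun t ht => (lt_of_lt_of_le hT0 ht).ne'
    exact ((Real.continuous_exp.continuousOn.div (continuous_pow k).continuousOn hne).mul
      (continuousOn_const.sub (continuousOn_const.div continuousOn_id hne')))
  -- main integral bounds for x ≥ T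
  set C : ℝ := ∫ t in (0:ℝ)..T, f t with hC_def
  have hbounds : ∀ x : ℝ, T ≤ x →
      C + (1 - ε') * (u x - u T) ≤ (∫ t in (0:ℝ)..x, f t) ∧
      (∫ t in (0:ℝ)..x, f t) ≤ C + c₁ * (u x - u T) := by
    intro x hx
    have hIcc : Set.uIcc T x = Set.Icc T x := Set.uIcc_of_le hx
    have hsub : Set.Icc T x ⊆ Set.Ici T := fun t ht => ht.1
    have hderiv : ∀ t ∈ Set.uIcc T x,
        HasDerivAt u (u t * (1 - (k : ℝ) / t)) t := by
      intro t ht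
      rw [hIcc] at ht
      exact hasDerivAt_u k hk t (lt_of_lt_of_le hT0 ht.1)
    have hint_u' : IntervalIntegrable (fun t => u t * (1 - (k : ℝ) / t)) MeasureTheory.volume T x := by
      apply ContinuousOn.intervalIntegrable
      rw [hIcc]
      exact hu'cont.mono hsub
    have hftc : ∫ t in T..x, u t * (1 - (k : ℝ) / t) = u x - u T :=
      intervalIntegral.integral_eq_sub_of_hasDerivAt hderiv hint_u'
    have hint_f : IntervalIntegrable f MeasureTheory.volume T x := hf.intervalIntegrable T x
    have hsplit : (∫ t in (0:ℝ)..x, f t) = C + ∫ t in T..x, f t := by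
      rw [hC_def, intervalIntegral.integral_add_adjacent_intervals
        (hf.intervalIntegrable 0 T) hint_f]
    constructor
    · -- lower bound
      have hmono : (1 - ε') * (u x - u T) ≤ ∫ t in T..x, f t := by
        have : ∫ t in T..x, (1 - ε') * (u t * (1 - (k : ℝ) / t)) ≤ ∫ t in T..x, f t := by
          apply intervalIntegral.integral_mono_on hx (hint_u'.const_mul _) hint_f
          intro t ht
          obtain ⟨hlb, _, hkt⟩ := hfact t ht.1
          have ht0 : 0 < t := lt_of_lt_of_le hT0 ht.1
          have hu0 : 0 ≤ u t := (hupos t ht0).le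
          have hkt0 : 0 ≤ (k : ℝ) / t := div_nonneg (Nat.cast_nonneg k) ht0.le
          nlinarith [mul_nonneg (mul_nonneg h1ε.le hu0) hkt0, hlb]
        rwa [intervalIntegral.integral_const_mul, hftc] at this
      rw [hsplit]
      linarith [hmono]
    · -- upper bound
      have hmono : (∫ t in T..x, f t) ≤ c₁ * (u x - u T) := by
        have : (∫ t in T..x, f t) ≤ ∫ t in T..x, c₁ * (u t * (1 - (k : ℝ) / t)) := by
          apply intervalIntegral.integral_mono_on hx hint_f (hint_u'.const_mul _)
          intro t ht
          obtain ⟨_, hub, hkt⟩ := hfact t ht.1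
          have ht0 : 0 < t := lt_of_lt_of_le hT0 ht.1
          have hu0 : 0 ≤ u t := (hupos t ht0).le
          calc f t ≤ (1 + ε') * u t := hub
            _ = c₁ * (u t * (1 - ε')) := by rw [← hc₁mul]; ring
            _ ≤ c₁ * (u t * (1 - (k : ℝ) / t)) := by
                apply mul_le_mul_of_nonneg_left _ hc₁pos.le
                apply mul_le_mul_of_nonneg_left _ hu0
                linarith
        rwa [intervalIntegral.integral_const_mul, hftc] at this
      rw [hsplit]
      linarith [hmono]
  -- choose x₁ large so that u x dominates constants
  have huT : 0 < u T := hupos T hT0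
  obtain ⟨x₁, hx₁⟩ := eventually_atTop.1
    (tendsto_atTop.1 (Real.tendsto_exp_div_pow_atTop k) ((|C| + u T) / ε'))
  refine ⟨max x₁ T, fun x hx => ?_⟩
  have hxT : T ≤ x := le_trans (le_max_right x₁ T) hx
  have hx0 : 0 < x := lt_of_lt_of_le hT0 hxT
  have hux : (|C| + u T) / ε' ≤ u x := hx₁ x (le_trans (le_max_left x₁ T) hx)
  have huxpos : 0 < u x := hupos x hx0
  have hCux : |C| + u T ≤ ε' * u x := by
    rw [div_le_iff₀ hε'pos] at hux
    linarith [hux]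
  obtain ⟨hlb, hub⟩ := hbounds x hxT
  set F : ℝ := ∫ t in (0:ℝ)..x, f t with hF_def
  -- bounds on F
  have habs : -|C| ≤ C ∧ C ≤ |C| := ⟨neg_abs_le C, le_abs_self C⟩
  have hFlb : (1 - 2 * ε') * u x ≤ F := by
    have e1 : (1 - ε') * (u x - u T) = u x - ε' * u x - u T + ε' * u T := by ring
    have e2 : (1 - 2 * ε') * u x = u x - 2 * (ε' * u x) := by ring
    have e3 : 0 ≤ ε' * u T := mul_nonneg hε'pos.le huT.le
    linarith [hlb, habs.1, hCux]
  have hd : 0 ≤ u x - u T := by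
    have h9 : ε' * u x ≤ (1/2) * u x := mul_le_mul_of_nonneg_right hε'le huxpos.le
    linarith [hCux, abs_nonneg C]
  have hFub : F ≤ (1 + 5 * ε') * u x := by
    have h5 : c₁ * (u x - u T) ≤ (1 + 4 * ε') * (u x - u T) :=
      mul_le_mul_of_nonneg_right hc₁le hd
    have e3 : (1 + 4 * ε') * (u x - u T)
        = u x + 4 * (ε' * u x) - u T - 4 * (ε' * u T) := by ring
    have e4 : (1 + 5 * ε') * u x = u x + 5 * (ε' * u x) := by ring
    have e5 : 0 ≤ ε' * u T := mul_nonneg hε'pos.le huT.le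
    linarith [hub, habs.2, hCux]
  -- convert to the goal
  have hexp : x ^ k * Real.exp (-x) * F = F / u x := by
    rw [hu_def]
    simp only
    rw [Real.exp_neg]
    have : x ^ k ≠ 0 := pow_ne_zero _ hx0.ne'
    field_simp
  rw [Real.dist_eq, hexp, abs_sub_lt_iff]
  constructor
  · rw [sub_lt_iff_lt_add, div_lt_iff₀ huxpos]
    have e6 : (ε + 1) * u x = (1 + 5 * ε') * u x + (ε - 5 * ε') * u x := by ring
    linarith [hFub, mul_pos (show (0:ℝ) < ε - 5 * ε' by linarith) huxpos, e6]
  · rw [sub_lt_comm, lt_div_iff₀ huxpos]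
    have e6 : (1 - ε) * u x = (1 - 2 * ε') * u x - (ε - 2 * ε') * u x := by ring
    linarith [hFlb, mul_pos (show (0:ℝ) < ε - 2 * ε' by linarith) huxpos, e6]

lemma hf1_cont : Continuous (fun z : ℝ => if z = 0 then 1 else (Real.exp z - 1) / z) := by
  rw [continuous_iff_continuousAt]
  intro z
  rcases eq_or_ne z 0 with rfl | hz
  · apply contAt_ite_zero
    have hd : HasDerivAt Real.exp 1 0 := by simpa using Real.hasDerivAt_exp 0
    have h := hasDerivAt_iff_tendsto_slope.1 hd
    refine h.congr fun y => ?_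
    simp [slope_fun_def, Real.exp_zero, div_eq_inv_mul]
  · have hc : ContinuousAt (fun y : ℝ => (Real.exp y - 1) / y) z :=
      (Real.continuous_exp.continuousAt.sub continuousAt_const).div continuousAt_id hz
    apply hc.congr
    filter_upwards [isOpen_compl_singleton.mem_nhds hz] with y hy
    simp only [Set.mem_compl_iff, Set.mem_singleton_iff] at hy
    simp [hy]

/-- `g x = ∫_0^x (e^z − 1)/z dz`, with the integrand extended continuously
by the value `1` at `z = 0`. -/
noncomputable def g (x : ℝ) : ℝ :=
  ∫ z in (0:ℝ)..x, if z = 0 then 1 else (Real.exp z - 1) / z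

lemma hg_deriv (x : ℝ) :
    HasDerivAt g (if x = 0 then 1 else (Real.exp x - 1) / x) x :=
  intervalIntegral.integral_hasDerivAt_right (hf1_cont.intervalIntegrable 0 x)
    (hf1_cont.stronglyMeasurableAtFilter _ _) hf1_cont.continuousAt

lemma hg_cont : Continuous g :=
  continuous_iff_continuousAt.2 fun x => (hg_deriv x).continuousAt

lemma hexp_neg_zero : Tendsto (fun t : ℝ => Real.exp (-t)) atTop (nhds 0) :=
  Real.tendsto_exp_atBot.comp tendsto_neg_atTop_atBot

lemma hg_asym : Tendsto (fun x : ℝ => x ^ 1 * Real.exp (-x) * g x) atTop (nhds 1) := by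
  apply key 1 le_rfl _ hf1_cont
  have hlim : Tendsto (fun t : ℝ => 1 - Real.exp (-t)) atTop (nhds 1) := by
    simpa using tendsto_const_nhds.sub hexp_neg_zero
  refine hlim.congr' ?_
  filter_upwards [eventually_ge_atTop (1:ℝ)] with t ht
  have ht0 : t ≠ 0 := by positivity
  rw [if_neg ht0, Real.exp_neg, pow_one]
  field_simp

lemma hf2_cont : Continuous (fun t : ℝ => if t = 0 then 1 else g t / t) := by
  rw [continuous_iff_continuousAt]
  intro z
  rcases eq_or_ne z 0 with rfl | hz
  · apply contAt_ite_zero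
    have hd : HasDerivAt g 1 0 := by simpa using hg_deriv 0
    have h := hasDerivAt_iff_tendsto_slope.1 hd
    refine h.congr fun y => ?_
    have hg0 : g 0 = 0 := intervalIntegral.integral_same
    simp [slope_fun_def, hg0, div_eq_inv_mul]
  · have hc : ContinuousAt (fun y : ℝ => g y / y) z :=
      hg_cont.continuousAt.div continuousAt_id hz
    apply hc.congr
    filter_upwards [isOpen_compl_singleton.mem_nhds hz] with y hy
    simp only [Set.mem_compl_iff, Set.mem_singleton_iff] at hy
    simp [hy]

/-- `h²(x) = (e^{−x}/(1 − e^{−x}))·∫_0^x g(t)/t dt` is asymptotically `1/x²`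
as `x → ∞`. -/
theorem h2_asymptotic :
    Tendsto
      (fun x : ℝ => x ^ 2 *
        (Real.exp (-x) / (1 - Real.exp (-x)) *
          ∫ t in (0:ℝ)..x, if t = 0 then 1 else g t / t))
      atTop (nhds 1) := by
  have h2 : Tendsto (fun x : ℝ => x ^ 2 * Real.exp (-x) *
      ∫ t in (0:ℝ)..x, if t = 0 then 1 else g t / t) atTop (nhds 1) := by
    apply key 2 (by norm_num) _ hf2_cont
    refine hg_asym.congr' ?_
    filter_upwards [eventually_ge_atTop (1:ℝ)] with t ht
    have ht0 : t ≠ 0 := by positivity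
    rw [if_neg ht0, pow_one]
    field_simp
  have h3 : Tendsto (fun x : ℝ => (1 - Real.exp (-x))⁻¹) atTop (nhds 1) := by
    have : Tendsto (fun x : ℝ => 1 - Real.exp (-x)) atTop (nhds 1) := by
      simpa using tendsto_const_nhds.sub hexp_neg_zero
    simpa using this.inv₀ one_ne_zero
  have := h2.mul h3
  rw [mul_one] at this
  refine this.congr fun x => ?_
  rw [div_eq_mul_inv]
  ring
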